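/- arXiv:1201.0700 — 2 statements merged into one kernel-verified Lean document; each statement's English description precedes it below -/
import Mathlib

section
/- Let φ: X → Y be a factor code with X a sofic shift. Then the set S(φ) of entropies of intermediate subshifts arising from decompositions of φ into factor codes is countable. -/
open Set Function Filter Topology

/-- The left shift map on bi-infinite sequences. -/
def shiftMap (A : Type*) : (ℤ → A) → (ℤ → A) := fun x i => x (i + 1)

/-- The product topology on `ℤ → A` where `A` carries the discrete topology. -/
def shiftTop (A : Type*) : TopologicalSpace (ℤ → A) :=
  @Pi.topologicalSpace ℤ (fun _ => A) (fun _ => ⊥)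

/-- A shift space: a closed, shift-invariant subset of the full shift. -/
def IsShiftSpace {A : Type*} (X : Set (ℤ → A)) : Prop :=
  @IsClosed _ (shiftTop A) X ∧ shiftMap A '' X = X

/-- The word `w` occurs in `x` at position `i`. -/
def OccursAt {A : Type*} (x : ℤ → A) (i : ℤ) (w : List A) : Prop :=
  ∀ j : Fin w.length, x (i + (j : ℕ)) = w.get j

/-- The word `w` belongs to the language of `X`. -/
def InLang {A : Type*} (X : Set (ℤ → A)) (w : List A) : Prop :=
  ∃ x ∈ X, OccursAt x 0 w

/-- Topological entropy of a shift space, `h(X) = lim (1/n) log |B_n(X)|`,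
which by subadditivity equals the infimum. -/
noncomputable def entropy {A : Type*} (X : Set (ℤ → A)) : ℝ :=
  ⨅ n : ℕ, Real.log (Set.ncard {w : List A | w.length = n + 1 ∧ InLang X w}) / (n + 1 : ℝ)

/-- A shift of finite type: defined by a finite set of forbidden words. -/
def IsSFT {A : Type*} (X : Set (ℤ → A)) : Prop :=
  ∃ F : Finset (List A), X = {x | ∀ i : ℤ, ∀ w ∈ F, ¬ OccursAt x i w}

/-- A factor code: a continuous, shift-commuting surjection from `X` onto `Y`. -/
def IsFactorCode {A B : Type*} (X : Set (ℤ → A)) (Y : Set (ℤ → B))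
    (f : (ℤ → A) → (ℤ → B)) : Prop :=
  @ContinuousOn _ _ (shiftTop A) (shiftTop B) f X ∧ Set.MapsTo f X Y ∧
    Set.SurjOn f X Y ∧ ∀ x ∈ X, f (shiftMap A x) = shiftMap B (f x)

/-- An embedding: a continuous, shift-commuting injection from `X` into `Y`. -/
def IsEmbeddingCode {A B : Type*} (X : Set (ℤ → A)) (Y : Set (ℤ → B))
    (f : (ℤ → A) → (ℤ → B)) : Prop :=
  @ContinuousOn _ _ (shiftTop A) (shiftTop B) f X ∧ Set.MapsTo f X Y ∧
    Set.InjOn f X ∧ ∀ x ∈ X, f (shiftMap A x) = shiftMap B (f x)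

/-- A sofic shift: the image of a shift of finite type under a factor code. -/
def IsSofic {A : Type*} (X : Set (ℤ → A)) : Prop :=
  ∃ (B : Type) (_ : Fintype B) (W : Set (ℤ → B)) (f : (ℤ → B) → (ℤ → A)),
    IsSFT W ∧ IsFactorCode W X f

/-- A mixing shift space. -/
def IsMixingShift {A : Type*} (X : Set (ℤ → A)) : Prop :=
  ∀ u v : List A, InLang X u → InLang X v →
    ∃ N : ℕ, ∀ n ≥ N, ∃ w : List A, w.length = n ∧ InLang X (u ++ w ++ v)

/-- An irreducible shift space. -/
def IsIrreducibleShift {A : Type*} (X : Set (ℤ → A)) : Prop :=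
  ∀ u v : List A, InLang X u → InLang X v → ∃ w : List A, InLang X (u ++ w ++ v)

/-- A nonwandering shift space. -/
def IsNonwanderingShift {A : Type*} (X : Set (ℤ → A)) : Prop :=
  ∀ u : List A, InLang X u → ∃ w : List A, InLang X (u ++ w ++ u)

/-- A coded system: contains an increasing sequence of irreducible SFTs whose
union is dense in it. -/
def IsCodedSystem {A : Type*} (X : Set (ℤ → A)) : Prop :=
  ∃ W : ℕ → Set (ℤ → A), Monotone W ∧
    (∀ n, IsSFT (W n) ∧ IsIrreducibleShift (W n) ∧ W n ⊆ X) ∧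
    @closure _ (shiftTop A) (⋃ n, W n) = X

/-- A Perron number: a real algebraic integer `≥ 1` strictly dominating in
absolute value all of its other algebraic conjugates. -/
def IsPerron (l : ℝ) : Prop :=
  1 ≤ l ∧ IsIntegral ℤ l ∧
    ∀ z : ℂ, Polynomial.aeval z (minpoly ℤ l) = 0 → z ≠ (l : ℂ) → ‖z‖ < l

/-- A weak Perron number: a real `λ ≥ 1` such that `λ^p` is Perron for some `p ≥ 1`. -/
def IsWeakPerron (l : ℝ) : Prop :=
  1 ≤ l ∧ ∃ p : ℕ, 0 < p ∧ IsPerron (l ^ p)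

/-- `P = { h ≥ 0 : e^h is a Perron number }`. -/
def PerronSet : Set ℝ := {h : ℝ | 0 ≤ h ∧ IsPerron (Real.exp h)}

/-- `P^w = { h ≥ 0 : e^h is a weak Perron number }`. -/
def WeakPerronSet : Set ℝ := {h : ℝ | 0 ≤ h ∧ IsWeakPerron (Real.exp h)}

/-- `S(φ)`: entropies of intermediate subshifts in decompositions of the factor
code `φ` into factor codes. -/
def FactorDecompEntropies {A B : Type*} (X : Set (ℤ → A)) (Y : Set (ℤ → B))
    (φ : (ℤ → A) → (ℤ → B)) : Set ℝ :=
  {r | ∃ (C : Type) (_ : Fintype C) (Z : Set (ℤ → C))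
        (φ1 : (ℤ → A) → (ℤ → C)) (φ2 : (ℤ → C) → (ℤ → B)),
      IsShiftSpace Z ∧ IsFactorCode X Z φ1 ∧ IsFactorCode Z Y φ2 ∧
      (∀ x ∈ X, φ x = φ2 (φ1 x)) ∧ r = entropy Z}

/-- `S_0(φ)`: entropies of intermediate SFTs in decompositions of the factor
code `φ` into factor codes. -/
def FactorDecompEntropiesSFT {A B : Type*} (X : Set (ℤ → A)) (Y : Set (ℤ → B))
    (φ : (ℤ → A) → (ℤ → B)) : Set ℝ :=
  {r | ∃ (C : Type) (_ : Fintype C) (Z : Set (ℤ → C))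
        (φ1 : (ℤ → A) → (ℤ → C)) (φ2 : (ℤ → C) → (ℤ → B)),
      IsShiftSpace Z ∧ IsSFT Z ∧ IsFactorCode X Z φ1 ∧ IsFactorCode Z Y φ2 ∧
      (∀ x ∈ X, φ x = φ2 (φ1 x)) ∧ r = entropy Z}

/-- `T(φ)`: entropies of irreducible intermediate shift spaces in decompositions
of the embedding `φ` into embeddings. -/
def EmbedDecompEntropies {A B : Type*} (X : Set (ℤ → A)) (Y : Set (ℤ → B))
    (φ : (ℤ → A) → (ℤ → B)) : Set ℝ :=
  {r | ∃ (C : Type) (_ : Fintype C) (Z : Set (ℤ → C))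
        (φ1 : (ℤ → A) → (ℤ → C)) (φ2 : (ℤ → C) → (ℤ → B)),
      IsShiftSpace Z ∧ IsIrreducibleShift Z ∧
      IsEmbeddingCode X Z φ1 ∧ IsEmbeddingCode Z Y φ2 ∧
      (∀ x ∈ X, φ x = φ2 (φ1 x)) ∧ r = entropy Z}

/-- `T_0(φ)`: as `T(φ)` but requiring the intermediate shift to be of finite type. -/
def EmbedDecompEntropiesSFT {A B : Type*} (X : Set (ℤ → A)) (Y : Set (ℤ → B))
    (φ : (ℤ → A) → (ℤ → B)) : Set ℝ :=
  {r | ∃ (C : Type) (_ : Fintype C) (Z : Set (ℤ → C))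
        (φ1 : (ℤ → A) → (ℤ → C)) (φ2 : (ℤ → C) → (ℤ → B)),
      IsShiftSpace Z ∧ IsIrreducibleShift Z ∧ IsSFT Z ∧
      IsEmbeddingCode X Z φ1 ∧ IsEmbeddingCode Z Y φ2 ∧
      (∀ x ∈ X, φ x = φ2 (φ1 x)) ∧ r = entropy Z}

/-- `T_1(φ)`: as `T(φ)` but requiring the intermediate shift to be sofic. -/
def EmbedDecompEntropiesSofic {A B : Type*} (X : Set (ℤ → A)) (Y : Set (ℤ → B))
    (φ : (ℤ → A) → (ℤ → B)) : Set ℝ :=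
  {r | ∃ (C : Type) (_ : Fintype C) (Z : Set (ℤ → C))
        (φ1 : (ℤ → A) → (ℤ → C)) (φ2 : (ℤ → C) → (ℤ → B)),
      IsShiftSpace Z ∧ IsIrreducibleShift Z ∧ IsSofic Z ∧
      IsEmbeddingCode X Z φ1 ∧ IsEmbeddingCode Z Y φ2 ∧
      (∀ x ∈ X, φ x = φ2 (φ1 x)) ∧ r = entropy Z}

/-- The set of least periods of periodic points of `X`. -/
def leastPeriods {A : Type*} (X : Set (ℤ → A)) : Set ℕ :=
  {k : ℕ | 0 < k ∧ ∃ x ∈ X, Function.minimalPeriod (shiftMap A) x = k}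

/-- `p` is the period of `X`: the gcd of the least periods of its periodic points. -/
def HasShiftPeriod {A : Type*} (X : Set (ℤ → A)) (p : ℕ) : Prop :=
  (∀ k ∈ leastPeriods X, p ∣ k) ∧ ∀ d : ℕ, (∀ k ∈ leastPeriods X, d ∣ k) → d ∣ p

/-- `q_k(X)`: the number of points of `X` of least period exactly `k`. -/
noncomputable def qk {A : Type*} (X : Set (ℤ → A)) (k : ℕ) : ℕ :=
  Set.ncard {x ∈ X | Function.minimalPeriod (shiftMap A) x = k}


/-- The sliding block code on `ℤ → A` with window radius `N` and block map `ρ`. -/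
def windowCode {A : Type*} (N : ℕ) (ρ : (Fin (2*N+1) → A) → (Fin (2*N+1) → A)) :
    (ℤ → A) → (ℤ → (Fin (2*N+1) → A)) :=
  fun x i => ρ (fun j => x (i + (j : ℕ) - (N : ℕ)))

lemma entropy_congr {A B : Type*} {Z : Set (ℤ → A)} {Z' : Set (ℤ → B)}
    (h : ∀ n : ℕ, Set.ncard {w : List B | w.length = n + 1 ∧ InLang Z' w}
       = Set.ncard {w : List A | w.length = n + 1 ∧ InLang Z w}) :
    entropy Z' = entropy Z := by
  unfold entropy
  congr 1
  ext n
  rw [h]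

lemma entropy_empty {A : Type*} : entropy (∅ : Set (ℤ → A)) = 0 := by
  have h : ∀ n : ℕ,
      {w : List A | w.length = n + 1 ∧ InLang (∅ : Set (ℤ → A)) w} = ∅ := by
    intro n
    ext w
    simp [InLang]
  unfold entropy
  simp [h]

/-- Transfer of language cardinalities along a letterwise map. -/
lemma ncard_lang_eq {C D : Type*} (Z : Set (ℤ → C)) (Z' : Set (ℤ → D)) (Φ : D → C)
    (hmaps : ∀ z' ∈ Z', (fun i => Φ (z' i)) ∈ Z)
    (hsurj : ∀ z ∈ Z, ∃ z' ∈ Z', z = fun i => Φ (z' i))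
    (hinj : ∀ z' ∈ Z', ∀ w' ∈ Z', ∀ i j : ℤ, Φ (z' i) = Φ (w' j) → z' i = w' j)
    (n : ℕ) :
    Set.ncard {w : List D | w.length = n ∧ InLang Z' w}
      = Set.ncard {w : List C | w.length = n ∧ InLang Z w} := by
  set S' : Set (List D) := {w | w.length = n ∧ InLang Z' w}
  set S : Set (List C) := {w | w.length = n ∧ InLang Z w}
  have hinjOn : Set.InjOn (List.map Φ) S' := by
    rintro w₁ ⟨hl₁, z₁, hz₁, ho₁⟩ w₂ ⟨hl₂, z₂, hz₂, ho₂⟩ heq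
    apply List.ext_get (by omega)
    intro k hk₁ hk₂
    have h1 : w₁.get ⟨k, hk₁⟩ = z₁ ((0:ℤ) + (k:ℕ)) := (ho₁ ⟨k, hk₁⟩).symm
    have h2 : w₂.get ⟨k, hk₂⟩ = z₂ ((0:ℤ) + (k:ℕ)) := (ho₂ ⟨k, hk₂⟩).symm
    have hΦ : Φ (w₁.get ⟨k, hk₁⟩) = Φ (w₂.get ⟨k, hk₂⟩) := by
      have := congrArg (fun l => l[k]?) heq
      simp only [List.getElem?_map] at this
      rw [List.getElem?_eq_getElem hk₁, List.getElem?_eq_getElem hk₂] at this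
      simpa using this
    rw [h1, h2] at hΦ ⊢
    exact hinj z₁ hz₁ z₂ hz₂ _ _ hΦ
  have himg : (List.map Φ) '' S' = S := by
    ext u
    constructor
    · rintro ⟨w, ⟨hl, z', hz', ho⟩, rfl⟩
      refine ⟨by simpa using hl, (fun i => Φ (z' i)), hmaps z' hz', ?_⟩
      intro j
      have hj : (j : ℕ) < w.length := by
        have := j.2; simpa using this
      have := ho ⟨j, hj⟩
      simp only
      rw [this]
      simp [List.getElem_map]
    · rintro ⟨hl, z, hz, ho⟩
      obtain ⟨z', hz', rfl⟩ := hsurj z hz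
      refine ⟨List.ofFn (fun j : Fin n => z' ((0:ℤ) + (j:ℕ))), ⟨by simp, z', hz', ?_⟩, ?_⟩
      · intro j
        have hj : (j : ℕ) < n := by simpa using j.2
        simp [List.get_ofFn]
      · apply List.ext_get (by simp [hl])
        intro k hk₁ hk₂
        simp only [List.get_eq_getElem, List.getElem_map, List.getElem_ofFn]
        have hk : k < n := by simpa using hk₁
        have := ho ⟨k, hk₂⟩
        simp only [List.get_eq_getElem] at this
        rw [← this]
  calc S'.ncard = ((List.map Φ) '' S').ncard := (Set.ncard_image_of_injOn hinjOn).symm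
    _ = S.ncard := by rw [himg]

/-- Curtis–Hedlund–Lyndon, coordinate-zero form. -/
lemma chl {A C : Type*} [Fintype A] (X : Set (ℤ → A)) (hX : IsShiftSpace X)
    (Z : Set (ℤ → C)) (φ1 : (ℤ → A) → (ℤ → C)) (h1 : IsFactorCode X Z φ1) :
    ∃ N : ℕ, ∀ x ∈ X, ∀ y ∈ X,
      (∀ i : ℤ, i.natAbs ≤ N → x i = y i) → φ1 x 0 = φ1 y 0 := by
  letI tA : TopologicalSpace A := ⊥
  letI tC : TopologicalSpace C := ⊥
  haveI : DiscreteTopology A := ⟨rfl⟩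
  haveI : DiscreteTopology C := ⟨rfl⟩
  have hcont : ContinuousOn φ1 X := h1.1
  have hcl : IsClosed X := hX.1
  have hXc : IsCompact X := hcl.isCompact
  set g : (ℤ → A) → C := fun y => φ1 y 0 with hg
  -- local constancy
  have claim : ∀ x : X, ∃ I : Finset ℤ, ∀ y ∈ X,
      (∀ i ∈ I, y i = (x : ℤ → A) i) → g y = g (x : ℤ → A) := by
    rintro ⟨x, hx⟩
    have hgc : ContinuousWithinAt g X x :=
      (continuous_apply (0 : ℤ)).continuousWithinAt.comp (hcont x hx) (Set.mapsTo_univ _ _)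
    have hmem : g ⁻¹' {g x} ∈ nhdsWithin x X := by
      apply hgc
      exact IsOpen.mem_nhds (isOpen_discrete _) rfl
    rw [mem_nhdsWithin] at hmem
    obtain ⟨U, hUo, hxU, hUX⟩ := hmem
    rw [isOpen_pi_iff] at hUo
    obtain ⟨I, u, hIu, hpi⟩ := hUo x hxU
    refine ⟨I, fun y hy hagree => ?_⟩
    have hyU : y ∈ U := by
      apply hpi
      intro i hi
      rw [hagree i hi]
      exact (hIu i hi).2
    exact hUX ⟨hyU, hy⟩
  choose I hI using claim
  set U : X → Set (ℤ → A) := fun x => {y | ∀ i ∈ I x, y i = (x : ℤ → A) i} with hU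
  have hUopen : ∀ x : X, IsOpen (U x) := by
    intro x
    have : U x = Set.pi (↑(I x)) (fun i => {(x : ℤ → A) i}) := by
      ext y; simp [hU, Set.pi]
    rw [this]
    exact isOpen_set_pi (I x).finite_toSet (fun i _ => isOpen_discrete _)
  have hcover : X ⊆ ⋃ x : X, U x := by
    intro x hx
    exact Set.mem_iUnion.2 ⟨⟨x, hx⟩, fun i _ => rfl⟩
  obtain ⟨t, ht⟩ := hXc.elim_finite_subcover U hUopen hcover
  refine ⟨t.sup (fun x => (I x).sup Int.natAbs), fun x hx y hy hagree => ?_⟩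
  obtain ⟨z, hzt, hxz⟩ : ∃ z ∈ t, x ∈ U z := by
    have := ht hx
    simpa using this
  have hyz : y ∈ U z := by
    intro i hi
    have hle : i.natAbs ≤ t.sup (fun x => (I x).sup Int.natAbs) :=
      le_trans (Finset.le_sup hi) (Finset.le_sup (f := fun x => (I x).sup Int.natAbs) hzt)
    rw [← hagree i hle]
    exact hxz i hi
  have h1' := hI z x hx hxz
  have h2' := hI z y hy hyz
  show g x = g y
  rw [h1', h2']

lemma shiftMap_iterate {A : Type*} (n : ℕ) (x : ℤ → A) (m : ℤ) :
    (shiftMap A)^[n] x m = x (m + n) := by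
  induction n generalizing x m with
  | zero => simp
  | succ k ih =>
    rw [Function.iterate_succ_apply, ih]
    show x (m + k + 1) = x (m + (k + 1 : ℕ))
    congr 1; push_cast; ring

lemma shift_exists {A C : Type*} {X : Set (ℤ → A)} (hX : IsShiftSpace X)
    {φ1 : (ℤ → A) → (ℤ → C)}
    (hcomm : ∀ x ∈ X, φ1 (shiftMap A x) = shiftMap C (φ1 x)) (i : ℤ) :
    ∀ x ∈ X, ∃ y ∈ X, (∀ m : ℤ, y m = x (m + i)) ∧ φ1 y 0 = φ1 x i := by
  have hfwd : ∀ x ∈ X, shiftMap A x ∈ X := fun x hx => hX.2 ▸ ⟨x, hx, rfl⟩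
  have iter_mem : ∀ (n : ℕ), ∀ x ∈ X, (shiftMap A)^[n] x ∈ X := by
    intro n
    induction n with
    | zero => intro x hx; simpa using hx
    | succ k ih =>
      intro x hx
      rw [Function.iterate_succ_apply]
      exact ih _ (hfwd x hx)
  have iter_comm : ∀ (n : ℕ), ∀ x ∈ X,
      φ1 ((shiftMap A)^[n] x) = (shiftMap C)^[n] (φ1 x) := by
    intro n
    induction n with
    | zero => intro x _; simp
    | succ k ih =>
      intro x hx
      rw [Function.iterate_succ_apply, ih _ (hfwd x hx), hcomm x hx,
        ← Function.iterate_succ_apply]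
  obtain ⟨n, rfl | rfl⟩ := Int.eq_nat_or_neg i
  · intro x hx
    refine ⟨(shiftMap A)^[n] x, iter_mem n x hx, fun m => shiftMap_iterate n x m, ?_⟩
    rw [iter_comm n x hx, shiftMap_iterate]
    norm_num
  · intro x hx
    have hpre : ∃ y ∈ X, (shiftMap A)^[n] y = x := by
      induction n generalizing x with
      | zero => exact ⟨x, hx, rfl⟩
      | succ k ih =>
        have hx' : x ∈ shiftMap A '' X := hX.2.symm ▸ hx
        obtain ⟨y', hy', hy'x⟩ := hx'
        obtain ⟨y, hy, hyk⟩ := ih y' hy'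
        refine ⟨y, hy, ?_⟩
        rw [Function.iterate_succ_apply']
        rw [hyk, hy'x]
    obtain ⟨y, hy, hyx⟩ := hpre
    refine ⟨y, hy, ?_, ?_⟩
    · intro m
      have h := shiftMap_iterate n y (m - n)
      rw [hyx] at h
      have he : (m - (n:ℤ)) + n = m := by ring
      rw [he] at h
      rw [show m + -(n:ℤ) = m - n by ring]
      exact h.symm
    · have hφ : φ1 x = (shiftMap C)^[n] (φ1 y) := by
        rw [← hyx, iter_comm n y hy]
      rw [hφ, shiftMap_iterate]
      norm_num

lemma key_lemma {A C : Type*} [Fintype A] (X : Set (ℤ → A)) (hX : IsShiftSpace X)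
    (hne : X.Nonempty) (Z : Set (ℤ → C)) (φ1 : (ℤ → A) → (ℤ → C))
    (h1 : IsFactorCode X Z φ1) :
    ∃ (N : ℕ) (ρ : (Fin (2*N+1) → A) → (Fin (2*N+1) → A)),
      entropy Z = entropy (windowCode N ρ '' X) := by
  classical
  obtain ⟨N, hN⟩ := chl X hX Z φ1 h1
  haveI : Nonempty A := ⟨hne.choose 0⟩
  set window : (ℤ → A) → ℤ → (Fin (2*N+1) → A) :=
    fun x i => fun j => x (i + (j : ℕ) - (N : ℕ)) with hwin
  set Φ : (Fin (2*N+1) → A) → C := fun d =>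
    φ1 (if h : ∃ x ∈ X, window x 0 = d then h.choose else hne.choose) 0 with hΦ
  -- Φ computes φ1 at coordinate 0 from the central window
  have propA : ∀ y ∈ X, Φ (window y 0) = φ1 y 0 := by
    intro y hy
    have hex : ∃ x ∈ X, window x 0 = window y 0 := ⟨y, hy, rfl⟩
    rw [hΦ]
    simp only [dif_pos hex]
    obtain ⟨hx', hwx'⟩ := hex.choose_spec
    refine hN _ hx' y hy ?_
    intro i hi
    have hj : (i + (N : ℤ)).toNat < 2 * N + 1 := by omega
    have hji : ((⟨(i + (N : ℤ)).toNat, hj⟩ : Fin (2*N+1)) : ℕ) = (i + (N : ℤ)).toNat := rfl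
    have := congrFun hwx' ⟨(i + (N : ℤ)).toNat, hj⟩
    simp only [hwin] at this
    have harg : (0 : ℤ) + ((i + (N : ℤ)).toNat : ℤ) - (N : ℤ) = i := by omega
    rwa [harg] at this
  have propB : ∀ x ∈ X, ∀ i : ℤ, φ1 x i = Φ (window x i) := by
    intro x hx i
    obtain ⟨y, hy, hcoord, hval⟩ := shift_exists hX h1.2.2.2 i x hx
    have hw : window y 0 = window x i := by
      funext j
      simp only [hwin]
      rw [hcoord]
      congr 1; ring
    rw [← hw, propA y hy, hval]
  set ρ : (Fin (2*N+1) → A) → (Fin (2*N+1) → A) := Function.invFun Φ ∘ Φ with hρ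
  have hρΦ : ∀ d, Φ (ρ d) = Φ d := fun d => Function.invFun_eq ⟨d, rfl⟩
  have hρinj : ∀ d d', Φ (ρ d) = Φ (ρ d') → ρ d = ρ d' := by
    intro d d' h
    rw [hρΦ, hρΦ] at h
    simp only [hρ, Function.comp_apply, h]
  have hcode : ∀ x, windowCode N ρ x = fun i => ρ (window x i) := fun x => rfl
  have hΦcode : ∀ x ∈ X, (fun i => Φ (windowCode N ρ x i)) = φ1 x := by
    intro x hx
    funext i
    rw [hcode]
    simp only
    rw [hρΦ, ← propB x hx]
  refine ⟨N, ρ, (entropy_congr ?_).symm⟩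
  intro n
  apply ncard_lang_eq Z (windowCode N ρ '' X) Φ
  · rintro z' ⟨x, hx, rfl⟩
    rw [hΦcode x hx]
    exact h1.2.1 hx
  · intro z hz
    obtain ⟨x, hx, hxz⟩ := h1.2.2.1 hz
    exact ⟨windowCode N ρ x, ⟨x, hx, rfl⟩, by rw [hΦcode x hx, hxz]⟩
  · rintro z' ⟨x, hx, rfl⟩ w' ⟨x', hx', rfl⟩ i j h
    rw [hcode] at h ⊢
    exact hρinj _ _ h

/-- If `φ : X → Y` is a factor code with `X` sofic, then
`S(φ)` is countable. -/
theorem factorDecompEntropies_countable_of_sofic {A B : Type*} [Fintype A] [Fintype B]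
    (X : Set (ℤ → A)) (Y : Set (ℤ → B)) (φ : (ℤ → A) → (ℤ → B))
    (hX : IsShiftSpace X) (hXsofic : IsSofic X) (hY : IsShiftSpace Y)
    (hφ : IsFactorCode X Y φ) :
    (FactorDecompEntropies X Y φ).Countable := by
  have hsub : FactorDecompEntropies X Y φ ⊆
      {(0 : ℝ)} ∪ ⋃ N : ℕ, Set.range
        (fun ρ : (Fin (2*N+1) → A) → (Fin (2*N+1) → A) =>
          entropy (windowCode N ρ '' X)) := by
    rintro r ⟨C, instC, Z, φ1, φ2, hZ, h1, h2, hcomp, rfl⟩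
    rcases X.eq_empty_or_nonempty with hXe | hXne
    · left
      have hZe : Z = ∅ := by
        have hs := h1.2.2.1
        rw [hXe] at hs
        have : Z ⊆ ∅ := by
          intro z hz
          simpa using hs hz
        exact Set.subset_empty_iff.1 this
      simp [hZe, entropy_empty]
    · right
      obtain ⟨N, ρ, heq⟩ := key_lemma X hX hXne Z φ1 h1
      exact Set.mem_iUnion.2 ⟨N, ⟨ρ, heq.symm⟩⟩
  apply Set.Countable.mono hsub
  apply Set.Countable.union (Set.countable_singleton 0)
  exact Set.countable_iUnion (fun N => Set.countable_range _)
end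

section
/- Let A be a finite alphabet, let n ≥ 4 be an integer, and let x ∈ A^ℤ. Suppose that for every i ∈ ℤ there exists an integer t with 1 ≤ t ≤ n/4 such that x_{j+t} = x_j for all j with i ≤ j ≤ i + n − 1 − t (that is, every length-n window of x overlaps itself after a shift of at most n/4 symbols). Then x is periodic: there exists an integer p ≥ 1 with x_{j+p} = x_j for all j ∈ ℤ. -/
open Set Function Filter Topology

/-- `f` has period `p` on the integer interval `[a, b]`. -/
def HasPerI {A : Type*} (f : ℤ → A) (a b : ℤ) (p : ℕ) : Prop :=
  ∀ j : ℤ, a ≤ j → j + (p : ℤ) ≤ b → f (j + (p : ℤ)) = f j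

lemma HasPerI.mono {A : Type*} {f : ℤ → A} {a b a' b' : ℤ} {p : ℕ}
    (h : HasPerI f a b p) (ha : a ≤ a') (hb : b' ≤ b) : HasPerI f a' b' p :=
  fun j hj hjb => h j (ha.trans hj) (hjb.trans hb)

lemma HasPerI.iterate {A : Type*} {f : ℤ → A} {a b : ℤ} {g : ℕ}
    (h : HasPerI f a b g) : ∀ (k : ℕ) (j : ℤ), a ≤ j → j + (k * g : ℤ) ≤ b →
      f (j + (k * g : ℤ)) = f j := by
  intro k
  induction k with
  | zero => intro j hj hjb; simp
  | succ k ih =>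
    intro j hj hjb
    push_cast at hjb ⊢
    have hkg : (0 : ℤ) ≤ (k : ℤ) * g := by positivity
    rw [show ((k : ℤ) + 1) * g = (k : ℤ) * g + g by ring] at hjb
    rw [show j + ((k : ℤ) + 1) * g = (j + (k : ℤ) * g) + g by ring,
      h (j + (k : ℤ) * g) (by omega) (by omega), ih j hj (by omega)]

/-- Extension step: a period `g` on `[a, b-p]` together with period `p` on
`[a, b]` extends `g` to all of `[a, b]`, given enough length. -/
lemma HasPerI.extend {A : Type*} {f : ℤ → A} {a b : ℤ} {p g : ℕ}
    (h1 : HasPerI f a b p) (h2 : HasPerI f a (b - p) g)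
    (hlen : (2 * p + g : ℤ) ≤ b - a + 1) : HasPerI f a b g := by
  intro j hj hjb
  by_cases hc : j + (g : ℤ) ≤ b - p
  · exact h2 j hj hc
  · have e1 : f (j + (g : ℤ) - p + p) = f (j + g - p) :=
      h1 (j + g - p) (by omega) (by omega)
    have e2 : f (j - (p : ℤ) + g) = f (j - p) := h2 (j - p) (by omega) (by omega)
    have e3 : f (j - (p : ℤ) + p) = f (j - p) := h1 (j - p) (by omega) (by omega)
    rw [show j + (g:ℤ) - p + p = j + g by ring] at e1
    rw [show j - (p:ℤ) + g = j + g - p by ring] at e2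
    rw [show j - (p:ℤ) + p = j by ring] at e3
    rw [e1, e2, ← e3]

/-- Induction step of Fine and Wilf, in the case `p < q`. -/
lemma fineWilfStep {A : Type*} {f : ℤ → A} {N p q : ℕ}
    (ih : ∀ p q : ℕ, p + q ≤ N → 0 < p → 0 < q → ∀ a b : ℤ,
      ((p : ℤ) + q ≤ b - a + 1) → HasPerI f a b p → HasPerI f a b q →
      HasPerI f a b (Nat.gcd p q))
    (hN : p + q ≤ N + 1) (hp : 0 < p) (hpq : p < q) {a b : ℤ}
    (hlen : (p : ℤ) + q ≤ b - a + 1)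
    (h1 : HasPerI f a b p) (h2 : HasPerI f a b q) :
    HasPerI f a b (Nat.gcd p q) := by
  have h2' : HasPerI f a (b - p) (q - p) := by
    intro j hj hjb
    have hq1 : f ((j + ((q:ℤ) - p)) + p) = f (j + ((q:ℤ) - p)) :=
      h1 (j + ((q:ℤ) - p)) (by omega) (by omega)
    have hq2 : f (j + (q : ℤ)) = f j := h2 j hj (by omega)
    rw [show ((q - p : ℕ) : ℤ) = (q : ℤ) - p by omega]
    rw [show (j + ((q:ℤ) - p)) + p = j + q by ring] at hq1
    rw [hq1] at hq2
    exact hq2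
  have h1' : HasPerI f a (b - p) p := h1.mono le_rfl (by omega)
  have hG : HasPerI f a (b - p) (Nat.gcd p (q - p)) :=
    ih p (q - p) (by omega) hp (by omega) a (b - p) (by omega) h1' h2'
  rw [Nat.gcd_sub_self_right hpq.le] at hG
  have hgle : Nat.gcd p q ≤ q - p :=
    Nat.le_of_dvd (by omega) (Nat.dvd_sub (Nat.gcd_dvd_right p q) (Nat.gcd_dvd_left p q))
  exact h1.extend hG (by omega)

/-- Fine and Wilf's periodicity lemma on integer intervals. -/
lemma fineWilf {A : Type*} {f : ℤ → A} :
    ∀ (N p q : ℕ), p + q ≤ N → 0 < p → 0 < q → ∀ a b : ℤ,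
      ((p : ℤ) + q ≤ b - a + 1) → HasPerI f a b p → HasPerI f a b q →
      HasPerI f a b (Nat.gcd p q) := by
  intro N
  induction N with
  | zero => intro p q hN hp hq; omega
  | succ N ih =>
    intro p q hN hp hq a b hlen h1 h2
    rcases lt_trichotomy p q with hpq | hpq | hpq
    · exact fineWilfStep ih hN hp hpq hlen h1 h2
    · subst hpq; simpa [Nat.gcd_self] using h2
    · rw [Nat.gcd_comm]
      exact fineWilfStep ih (by omega) hq hpq (by omega) h2 h1

/-- If every length-`n` window of `x ∈ A^ℤ` (with `n ≥ 4`)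
overlaps itself after a shift of at most `n/4` symbols, then `x` is periodic. -/
theorem periodic_of_small_self_overlap {A : Type*} [Fintype A]
    (n : ℕ) (hn : 4 ≤ n) (x : ℤ → A)
    (hov : ∀ i : ℤ, ∃ t : ℤ, 1 ≤ t ∧ 4 * t ≤ (n : ℤ) ∧
      ∀ j : ℤ, i ≤ j → j ≤ i + (n : ℤ) - 1 - t → x (j + t) = x j) :
    ∃ p : ℤ, 1 ≤ p ∧ ∀ j : ℤ, x (j + p) = x j := by
  classical
  -- the minimal admissible shift for the window at `i`
  set P : ℤ → ℕ → Prop := fun i t =>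
    0 < t ∧ 4 * t ≤ n ∧ HasPerI x i (i + (n : ℤ) - 1) t with hPdef
  have hP : ∀ i : ℤ, ∃ t : ℕ, P i t := by
    intro i
    obtain ⟨t, ht1, ht4, ht⟩ := hov i
    refine ⟨t.toNat, by omega, by omega, ?_⟩
    intro j hj hjb
    rw [show ((t.toNat : ℤ)) = t by omega]
    exact ht j hj (by omega)
  set m : ℤ → ℕ := fun i => Nat.find (hP i) with hmdef
  have hm : ∀ i, P i (m i) := fun i => Nat.find_spec (hP i)
  have hmin : ∀ i t, P i t → m i ≤ t := fun i t ht => Nat.find_min' (hP i) ht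
  -- key step : the minimal shift is constant
  have key : ∀ i : ℤ, m (i + 1) = m i := by
    intro i
    obtain ⟨hp0, hp4, hp⟩ := hm i
    obtain ⟨hq0, hq4, hq⟩ := hm (i + 1)
    set p := m i
    set q := m (i + 1)
    set g := Nat.gcd p q with hgdef
    have hg0 : 0 < g := Nat.gcd_pos_of_pos_left q hp0
    have hgp : g ≤ p := Nat.gcd_le_left q hp0
    have hgq : g ≤ q := Nat.le_of_dvd hq0 (Nat.gcd_dvd_right p q)
    -- Fine–Wilf on the common interval [i+1, i+n-1]
    have hG : HasPerI x (i + 1) (i + (n : ℤ) - 1) g := by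
      refine fineWilf (p + q) p q le_rfl hp0 hq0 _ _ (by omega)
        (hp.mono (by omega) le_rfl) (hq.mono le_rfl (by omega))
    obtain ⟨s, hs⟩ := Nat.gcd_dvd_left p q
    obtain ⟨r, hr⟩ := Nat.gcd_dvd_right p q
    have hsg : ((s - 1 : ℕ) : ℤ) * (g : ℤ) + (g : ℤ) = (p : ℤ) := by
      have hnat : (s - 1) * g + g = p := by
        cases s with
        | zero => rw [hs]; ring_nf; omega
        | succ s' =>
          simp only [Nat.succ_sub_one]
          rw [show s' * g + g = g * (s' + 1) by ring, ← hs]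
      exact_mod_cast hnat
    have hrg : ((r - 1 : ℕ) : ℤ) * (g : ℤ) + (g : ℤ) = (q : ℤ) := by
      have hnat : (r - 1) * g + g = q := by
        cases r with
        | zero => rw [hr]; ring_nf; omega
        | succ r' =>
          simp only [Nat.succ_sub_one]
          rw [show r' * g + g = g * (r' + 1) by ring, ← hr]
      exact_mod_cast hnat
    -- g is a period of the whole window at i
    have hGi : HasPerI x i (i + (n : ℤ) - 1) g := by
      intro j hj hjb
      rcases eq_or_lt_of_le hj with heq | hj1
      · rw [← heq]
        have e1 : x (i + (p : ℤ)) = x i := hp i le_rfl (by omega)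
        have e2 : x ((i + (g : ℤ)) + ((s - 1 : ℕ) * (g : ℕ) : ℤ)) = x (i + g) :=
          hG.iterate (s - 1) (i + g) (by omega) (by omega)
        rw [show (i + (g : ℤ)) + ((s - 1 : ℕ) * (g : ℕ) : ℤ) = i + p by omega]
          at e2
        rw [← e1, ← e2]
      · exact hG j (by omega) hjb
    have hgp' : p ≤ g := hmin i g ⟨hg0, by omega, hGi⟩
    -- g is a period of the whole window at i+1
    have hGi1 : HasPerI x (i + 1) (i + 1 + (n : ℤ) - 1) g := by
      intro j hj hjb
      by_cases hc : j + (g : ℤ) ≤ i + (n : ℤ) - 1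
      · exact hG j hj hc
      · have e1 : x ((i + 1 + (n : ℤ) - 1 - q) + (q : ℤ)) = x (i + 1 + (n : ℤ) - 1 - q) :=
          hq (i + 1 + (n : ℤ) - 1 - q) (by omega) (by omega)
        have e2 : x ((i + 1 + (n : ℤ) - 1 - q) + ((r - 1 : ℕ) * (g : ℕ) : ℤ))
            = x (i + 1 + (n : ℤ) - 1 - q) :=
          hG.iterate (r - 1) _ (by omega) (by omega)
        rw [show (i + 1 + (n : ℤ) - 1 - q) + ((r - 1 : ℕ) * (g : ℕ) : ℤ)
            = i + (n : ℤ) - g by omega] at e2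
        rw [show (i + 1 + (n : ℤ) - 1 - q) + (q : ℤ) = i + n by ring] at e1
        rw [show j = i + (n : ℤ) - g by omega,
          show i + (n : ℤ) - g + g = i + n by ring, e1, e2]
    have hgq' : q ≤ g := hmin (i + 1) g ⟨hg0, by omega, hGi1⟩
    omega
  -- hence m is constant
  have hconst : ∀ i : ℤ, m i = m 0 := by
    intro i
    induction i using Int.induction_on with
    | zero => rfl
    | succ k ih => rw [key k]; exact ih
    | pred k ih =>
      have h := key (-(k : ℤ) - 1)
      rw [show -(k : ℤ) - 1 + 1 = -(k : ℤ) by ring] at h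
      omega
  obtain ⟨hp0, hp4, hp⟩ := hm 0
  refine ⟨(m 0 : ℤ), by exact_mod_cast hp0, fun j => ?_⟩
  obtain ⟨h0, h4, h⟩ := hm j
  rw [hconst j] at h
  exact h j le_rfl (by omega)
end
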